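/- The limit f of the sequence (f_n) defined by the self-similar recursion f_{n+1}(x) = (2/7)f_n(3x) on [0,1/3], (3/7)f_n(3x−1)+2/7 on (1/3,2/3], (2/7)f_n(3x−2)+5/7 on (2/3,1], with f₀(x)=x, is a strictly increasing continuous function on [0,1] with f(0)=0 and f(1)=1. -/

import Mathlib

open Set Filter

/-- Glue continuity on a union of two closed sets. -/
lemma stmt11_glue {f : ℝ → ℝ} {s t : Set ℝ} (hs : IsClosed s) (ht : IsClosed t)
    (cs : ContinuousOn f s) (ct : ContinuousOn f t) : ContinuousOn f (s ∪ t) := by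
  intro x hx
  refine ContinuousWithinAt.union ?_ ?_
  · by_cases h : x ∈ s
    · exact cs x h
    · exact continuousWithinAt_of_notMem_closure (by rwa [hs.closure_eq])
  · by_cases h : x ∈ t
    · exact ct x h
    · exact continuousWithinAt_of_notMem_closure (by rwa [ht.closure_eq])

set_option maxHeartbeats 1000000

/-- The uniform limit `f` of the sequence `(f_n)` defined by `f₀(x) = x` and the
self-similar recursion with weights `2/7, 3/7, 2/7` is a strictly increasing
continuous function on `[0,1]` with `f(0) = 0` and `f(1) = 1`. -/
theorem stmt11 (fN : ℕ → ℝ → ℝ) (f : ℝ → ℝ)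
    (h0 : ∀ x ∈ Set.Icc (0 : ℝ) 1, fN 0 x = x)
    (hrec : ∀ n : ℕ, ∀ x ∈ Set.Icc (0 : ℝ) 1,
      (x ≤ 1 / 3 → fN (n + 1) x = 2 / 7 * fN n (3 * x)) ∧
      (1 / 3 < x → x ≤ 2 / 3 → fN (n + 1) x = 3 / 7 * fN n (3 * x - 1) + 2 / 7) ∧
      (2 / 3 < x → fN (n + 1) x = 2 / 7 * fN n (3 * x - 2) + 5 / 7))
    (hconv : TendstoUniformlyOn (fun n => fN n) f Filter.atTop (Set.Icc 0 1)) :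
    StrictMonoOn f (Set.Icc (0 : ℝ) 1) ∧ ContinuousOn f (Set.Icc (0 : ℝ) 1) ∧
      f 0 = 0 ∧ f 1 = 1 := by
  -- Main induction: endpoint values, strict monotonicity and continuity of each `fN n`.
  have key : ∀ n : ℕ, fN n 0 = 0 ∧ fN n 1 = 1 ∧ StrictMonoOn (fN n) (Set.Icc 0 1) ∧
      ContinuousOn (fN n) (Set.Icc 0 1) := by
    intro n
    induction n with
    | zero =>
      refine ⟨h0 0 (by norm_num), h0 1 (by norm_num), ?_, ?_⟩
      · intro x hx y hy hxy; rw [h0 x hx, h0 y hy]; exact hxy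
      · exact continuousOn_id.congr fun x hx => h0 x hx
    | succ n ih =>
      obtain ⟨e0, e1, sm, cont⟩ := ih
      have mono := sm.monotoneOn
      have mem : ∀ x ∈ Set.Icc (0:ℝ) 1, fN n x ∈ Set.Icc (0:ℝ) 1 := by
        intro x hx
        constructor
        · rw [← e0]; exact mono (by norm_num) hx hx.1
        · rw [← e1]; exact mono hx (by norm_num) hx.2
      have pos : ∀ x ∈ Set.Icc (0:ℝ) 1, 0 < x → 0 < fN n x := by
        intro x hx hx0; rw [← e0]; exact sm (by norm_num) hx hx0
      have c1 : ∀ x ∈ Set.Icc (0:ℝ) 1, x ≤ 1/3 → fN (n+1) x = 2/7 * fN n (3*x) :=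
        fun x hx h => (hrec n x hx).1 h
      have c2 : ∀ x ∈ Set.Icc (0:ℝ) 1, 1/3 < x → x ≤ 2/3 →
          fN (n+1) x = 3/7 * fN n (3*x - 1) + 2/7 :=
        fun x hx h h' => (hrec n x hx).2.1 h h'
      have c3 : ∀ x ∈ Set.Icc (0:ℝ) 1, 2/3 < x → fN (n+1) x = 2/7 * fN n (3*x - 2) + 5/7 :=
        fun x hx h => (hrec n x hx).2.2 h
      have he0 : fN (n+1) 0 = 0 := by
        rw [c1 0 (by norm_num) (by norm_num)]; norm_num [e0]
      have he1 : fN (n+1) 1 = 1 := by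
        rw [c3 1 (by norm_num) (by norm_num)]; norm_num [e1]
      refine ⟨he0, he1, ?_, ?_⟩
      · -- strict monotonicity
        intro x hx y hy hxy
        rcases le_or_gt x (1/3) with hx1 | hx1
        · have m3x : 3*x ∈ Set.Icc (0:ℝ) 1 := ⟨by linarith [hx.1], by linarith⟩
          rw [c1 x hx hx1]
          rcases le_or_gt y (1/3) with hy1 | hy1
          · have m3y : 3*y ∈ Set.Icc (0:ℝ) 1 := ⟨by linarith [hy.1], by linarith⟩
            rw [c1 y hy hy1]
            have := sm m3x m3y (by linarith)
            linarith
          · have hup : fN n (3*x) ≤ 1 := (mem _ m3x).2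
            rcases le_or_gt y (2/3) with hy2 | hy2
            · have m3y : 3*y - 1 ∈ Set.Icc (0:ℝ) 1 := ⟨by linarith, by linarith⟩
              rw [c2 y hy hy1 hy2]
              have := pos _ m3y (by linarith)
              linarith
            · have m3y : 3*y - 2 ∈ Set.Icc (0:ℝ) 1 := ⟨by linarith, by linarith [hy.2]⟩
              rw [c3 y hy hy2]
              have := (mem _ m3y).1
              linarith
        · rcases le_or_gt x (2/3) with hx2 | hx2
          · have m3x : 3*x - 1 ∈ Set.Icc (0:ℝ) 1 := ⟨by linarith, by linarith⟩
            rw [c2 x hx hx1 hx2]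
            rcases le_or_gt y (2/3) with hy2 | hy2
            · have m3y : 3*y - 1 ∈ Set.Icc (0:ℝ) 1 := ⟨by linarith, by linarith⟩
              rw [c2 y hy (by linarith) hy2]
              have := sm m3x m3y (by linarith)
              linarith
            · have m3y : 3*y - 2 ∈ Set.Icc (0:ℝ) 1 := ⟨by linarith, by linarith [hy.2]⟩
              rw [c3 y hy hy2]
              have h1 := (mem _ m3x).2
              have h2 := pos _ m3y (by linarith)
              linarith
          · have m3x : 3*x - 2 ∈ Set.Icc (0:ℝ) 1 := ⟨by linarith, by linarith [hx.2]⟩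
            have m3y : 3*y - 2 ∈ Set.Icc (0:ℝ) 1 := ⟨by linarith, by linarith [hy.2]⟩
            rw [c3 x hx hx2, c3 y hy (by linarith)]
            have := sm m3x m3y (by linarith)
            linarith
      · -- continuity
        have hcomp : ∀ (a b : ℝ), ContinuousOn (fun x => fN n (a*x + b))
            {x | a*x + b ∈ Set.Icc (0:ℝ) 1} := by
          intro a b
          exact cont.comp (Continuous.continuousOn (by continuity)) fun x hx => hx
        have cg1 : ContinuousOn (fN (n+1)) (Set.Icc (0:ℝ) (1/3)) := by
          have : ContinuousOn (fun x => 2/7 * fN n (3*x)) (Set.Icc (0:ℝ) (1/3)) := by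
            refine (((hcomp 3 0).mono ?_).const_smul (2/7 : ℝ)).congr fun x _ => by
              simp [smul_eq_mul]
            intro x hx; simp only [mem_setOf_eq, add_zero]
            exact ⟨by linarith [hx.1], by linarith [hx.2]⟩
          exact this.congr fun x hx =>
            c1 x ⟨hx.1, by linarith [hx.2]⟩ hx.2
        have cg2 : ContinuousOn (fN (n+1)) (Set.Icc (1/3 : ℝ) (2/3)) := by
          have : ContinuousOn (fun x => 3/7 * fN n (3*x - 1) + 2/7)
              (Set.Icc (1/3 : ℝ) (2/3)) := by
            refine ContinuousOn.add ?_ continuousOn_const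
            refine (((hcomp 3 (-1)).mono ?_).const_smul (3/7 : ℝ)).congr fun x _ => by
              simp [smul_eq_mul, sub_eq_add_neg]
            intro x hx; simp only [mem_setOf_eq]
            constructor <;> [linarith [hx.1]; linarith [hx.2]]
          refine this.congr fun x hx => ?_
          rcases lt_or_ge (1/3 : ℝ) x with h | h
          · exact c2 x ⟨by linarith [hx.1], by linarith [hx.2]⟩ h hx.2
          · have hx13 : x = 1/3 := le_antisymm h hx.1
            subst hx13
            rw [c1 (1/3) (by norm_num) le_rfl]
            norm_num [e0, e1]
        have cg3 : ContinuousOn (fN (n+1)) (Set.Icc (2/3 : ℝ) 1) := by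
          have : ContinuousOn (fun x => 2/7 * fN n (3*x - 2) + 5/7)
              (Set.Icc (2/3 : ℝ) 1) := by
            refine ContinuousOn.add ?_ continuousOn_const
            refine (((hcomp 3 (-2)).mono ?_).const_smul (2/7 : ℝ)).congr fun x _ => by
              simp [smul_eq_mul, sub_eq_add_neg]
            intro x hx; simp only [mem_setOf_eq]
            constructor <;> [linarith [hx.1]; linarith [hx.2]]
          refine this.congr fun x hx => ?_
          rcases lt_or_ge (2/3 : ℝ) x with h | h
          · exact c3 x ⟨by linarith [hx.1], hx.2⟩ h
          · have hx23 : x = 2/3 := le_antisymm h hx.1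
            subst hx23
            rw [c2 (2/3) (by norm_num) (by norm_num) le_rfl]
            norm_num [e0, e1]
        have hunion : Set.Icc (0:ℝ) 1 =
            (Set.Icc (0:ℝ) (1/3) ∪ Set.Icc (1/3:ℝ) (2/3)) ∪ Set.Icc (2/3:ℝ) 1 := by
          rw [Set.Icc_union_Icc_eq_Icc (by norm_num) (by norm_num),
            Set.Icc_union_Icc_eq_Icc (by norm_num) (by norm_num)]
        rw [hunion]
        exact stmt11_glue (isClosed_Icc.union isClosed_Icc) isClosed_Icc
          (stmt11_glue isClosed_Icc isClosed_Icc cg1 cg2) cg3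
  -- Stabilization at triadic points.
  have stab : ∀ n k : ℕ, ∀ i : ℕ, i ≤ 3^n →
      fN (n + k) ((i : ℝ) / 3^n) = fN n ((i : ℝ) / 3^n) := by
    intro n
    induction n with
    | zero =>
      intro k i hi
      interval_cases i
      · simpa using ((key k).1.trans (key 0).1.symm)
      · simpa using ((key k).2.1.trans (key 0).2.1.symm)
    | succ n ih =>
      intro k i hi
      set t : ℝ := (i : ℝ) / 3^(n+1) with ht
      have h3 : (0:ℝ) < 3^(n+1) := by positivity
      have h3n : (0:ℝ) < 3^n := by positivity
      have hiR : (i : ℝ) ≤ 3^(n+1) := by exact_mod_cast Nat.cast_le.mpr hi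
      have htmem : t ∈ Set.Icc (0:ℝ) 1 := by
        constructor
        · positivity
        · rw [div_le_one h3]; exact hiR
      rcases le_or_gt i (3^n) with hc1 | hc1
      · have hle : t ≤ 1/3 := by
          rw [ht, div_le_div_iff₀ h3 (by norm_num)]
          have : (i:ℝ) ≤ 3^n := by exact_mod_cast hc1
          rw [pow_succ]; nlinarith
        have h3t : 3 * t = (i:ℝ) / 3^n := by
          rw [ht, pow_succ]; field_simp
        rw [show n + 1 + k = (n + k) + 1 from by ring,
          (hrec (n+k) t htmem).1 hle, (hrec n t htmem).1 hle, h3t, ih k i hc1]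
      · rcases le_or_gt i (2 * 3^n) with hc2 | hc2
        · have h1 : (1:ℝ)/3 < t := by
            rw [ht, div_lt_div_iff₀ (by norm_num) h3]
            have : (3:ℝ)^n < i := by exact_mod_cast hc1
            rw [pow_succ]; nlinarith
          have h2 : t ≤ 2/3 := by
            rw [ht, div_le_div_iff₀ h3 (by norm_num)]
            have : (i:ℝ) ≤ 2 * 3^n := by exact_mod_cast hc2
            rw [pow_succ]; nlinarith
          have h3t : 3 * t - 1 = ((i - 3^n : ℕ) : ℝ) / 3^n := by
            have : ((i - 3^n : ℕ) : ℝ) = (i:ℝ) - 3^n := by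
              push_cast [Nat.cast_sub hc1.le]; ring
            rw [this, ht, pow_succ]; field_simp
          have hle' : i - 3^n ≤ 3^n := by omega
          rw [show n + 1 + k = (n + k) + 1 from by ring,
            (hrec (n+k) t htmem).2.1 h1 h2, (hrec n t htmem).2.1 h1 h2, h3t,
            ih k (i - 3^n) hle']
        · have h1 : (2:ℝ)/3 < t := by
            rw [ht, div_lt_div_iff₀ (by norm_num) h3]
            have : 2 * (3:ℝ)^n < i := by exact_mod_cast hc2
            rw [pow_succ]; nlinarith
          have h3t : 3 * t - 2 = ((i - 2 * 3^n : ℕ) : ℝ) / 3^n := by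
            have : ((i - 2 * 3^n : ℕ) : ℝ) = (i:ℝ) - 2 * 3^n := by
              push_cast [Nat.cast_sub hc2.le]; ring
            rw [this, ht, pow_succ]; field_simp
          have hle' : i - 2 * 3^n ≤ 3^n := by
            have : 3^(n+1) = 3 * 3^n := by ring
            omega
          rw [show n + 1 + k = (n + k) + 1 from by ring,
            (hrec (n+k) t htmem).2.2 h1, (hrec n t htmem).2.2 h1, h3t,
            ih k (i - 2 * 3^n) hle']
  -- Pointwise convergence.
  have hpt : ∀ x ∈ Set.Icc (0:ℝ) 1, Filter.Tendsto (fun n => fN n x) Filter.atTop (nhds (f x)) :=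
    fun x hx => hconv.tendsto_at hx
  -- Value of `f` at triadic points.
  have ftri : ∀ n : ℕ, ∀ i : ℕ, i ≤ 3^n → f ((i : ℝ) / 3^n) = fN n ((i : ℝ) / 3^n) := by
    intro n i hi
    have h3 : (0:ℝ) < 3^n := by positivity
    have hmem : (i : ℝ) / 3^n ∈ Set.Icc (0:ℝ) 1 := by
      constructor
      · positivity
      · rw [div_le_one h3]; exact_mod_cast hi
    have hev : ∀ᶠ m in Filter.atTop, fN m ((i : ℝ) / 3^n) = fN n ((i : ℝ) / 3^n) := by
      filter_upwards [Filter.eventually_ge_atTop n] with m hm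
      have := stab n (m - n) i hi
      rwa [Nat.add_sub_cancel' hm] at this
    exact tendsto_nhds_unique (hpt _ hmem)
      (Filter.Tendsto.congr' (hev.mono fun m h => h.symm) tendsto_const_nhds)
  -- Monotonicity of `f`.
  have fmono : MonotoneOn f (Set.Icc (0:ℝ) 1) := by
    intro x hx y hy hxy
    refine le_of_tendsto_of_tendsto (hpt x hx) (hpt y hy) (Filter.Eventually.of_forall fun n => ?_)
    exact (key n).2.2.1.monotoneOn hx hy hxy
  have f0 : f 0 = 0 := by
    have := ftri 0 0 (by norm_num)
    simpa [(key 0).1] using this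
  have f1 : f 1 = 1 := by
    have := ftri 0 1 (by norm_num)
    simpa [(key 0).2.1] using this
  refine ⟨?_, hconv.continuousOn (Filter.Eventually.of_forall fun n => (key n).2.2.2).frequently, f0, f1⟩
  -- Strict monotonicity of `f`.
  intro x hx y hy hxy
  obtain ⟨n, hn⟩ : ∃ n : ℕ, (1/3 : ℝ)^n < (y - x)/2 := by
    refine exists_pow_lt_of_lt_one (by linarith) (by norm_num)
  have h3 : (0:ℝ) < 3^n := by positivity
  have hn' : 2 / 3^n < y - x := by
    have : (1/3 : ℝ)^n = 1 / 3^n := by rw [div_pow]; norm_num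
    rw [this] at hn
    rw [div_lt_iff₀ h3] at hn ⊢
    linarith
  set i : ℕ := ⌈(3:ℝ)^n * x⌉₊ with hi
  have hxle : x ≤ (i : ℝ) / 3^n := by
    rw [le_div_iff₀ h3]
    calc x * 3^n = 3^n * x := by ring
    _ ≤ i := Nat.le_ceil _
  have hceil : (i : ℝ) < 3^n * x + 1 :=
    Nat.ceil_lt_add_one (mul_nonneg h3.le hx.1)
  have hley : ((i : ℝ) + 1) / 3^n ≤ y := by
    rw [div_le_iff₀ h3]
    have : 2 ≤ 3^n * (y - x) := by
      rw [div_lt_iff₀ h3] at hn'; linarith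
    nlinarith
  have hi1 : i + 1 ≤ 3^n := by
    have : ((i:ℝ) + 1) ≤ 3^n := by
      have := hley.trans hy.2
      rw [div_le_one h3] at this; exact this
    exact_mod_cast (by push_cast; linarith : ((i + 1 : ℕ) : ℝ) ≤ ((3^n : ℕ) : ℝ))
  have t1mem : (i : ℝ) / 3^n ∈ Set.Icc (0:ℝ) 1 := by
    constructor
    · positivity
    · rw [div_le_one h3]
      have : (i:ℝ) ≤ (3:ℝ)^n := by exact_mod_cast (by omega : i ≤ 3^n)
      exact this
  have t2mem : ((i + 1 : ℕ) : ℝ) / 3^n ∈ Set.Icc (0:ℝ) 1 := by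
    constructor
    · positivity
    · rw [div_le_one h3]; exact_mod_cast hi1
  have step1 : f x ≤ f ((i : ℝ) / 3^n) := fmono hx t1mem hxle
  have step3 : f (((i+1 : ℕ) : ℝ) / 3^n) ≤ f y := by
    refine fmono t2mem hy ?_
    push_cast; exact hley
  have step2 : f ((i : ℝ) / 3^n) < f (((i+1 : ℕ) : ℝ) / 3^n) := by
    rw [ftri n i (by omega), ftri n (i+1) hi1]
    refine (key n).2.2.1 t1mem t2mem ?_
    rw [div_lt_div_iff₀ h3 h3]
    push_cast; nlinarith
  linarith
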